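/- Assume ∫_τ^∞ p(u) du < ∞. Let x be a solution of (E) with x(t) > 0 and x′(t) ≥ 0 for all t ≥ τ. Then for every k and every s ∈ [t_k, ζ_k], x′(s)/φ(x(s)) ≥ (1/r(s))·∫_{t_{k+1}}^∞ p(u) du. -/

import Mathlib

open MeasureTheory Set Filter

theorem stmt14
    (t ζ : ℕ → ℝ) (ht_mono : StrictMono t)
    (ht_top : Tendsto t atTop atTop)
    (hζ : ∀ k : ℕ, ζ k ∈ Icc (t k) (t (k+1)))
    (r : ℝ → ℝ) (hr_cont : ContinuousOn r (Ici (t 0)))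
    (hr_pos : ∀ s ∈ Ici (t 0), 0 < r s)
    (f : ℝ → ℝ → ℝ)
    (hf_cont : ContinuousOn (fun q : ℝ × ℝ => f q.1 q.2) ((Ici (t 0)) ×ˢ (univ : Set ℝ)))
    (hf_sign : ∀ s ∈ Ici (t 0), ∀ y : ℝ, y ≠ 0 → 0 < y * f s y)
    (x x' : ℝ → ℝ)
    (hx_deriv : ∀ s ∈ Ici (t 0), HasDerivAt x (x' s) s)
    (hx'_cont : ContinuousOn x' (Ici (t 0)))
    (hE : ∀ k : ℕ, ∀ s ∈ Ioo (t k) (t (k+1)),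
      HasDerivAt (fun u => r u * x' u) (-(f s (x (ζ k)))) s)
    (p : ℝ → ℝ) (hp_cont : ContinuousOn p (Ici (t 0)))
    (hp_nonneg : ∀ s ∈ Ici (t 0), 0 ≤ p s)
    (φ : ℝ → ℝ) (hφ_smooth : ContDiff ℝ 1 φ) (hφ_mono : Monotone φ)
    (hφ_sign : ∀ y : ℝ, y ≠ 0 → 0 < y * φ y)
    (hfp_pos : ∀ s ∈ Ici (t 0), ∀ y : ℝ, 0 < y → p s * φ y ≤ f s y)
    (hfp_neg : ∀ s ∈ Ici (t 0), ∀ y : ℝ, y < 0 → f s y ≤ p s * φ y)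
    (hp_int : ∫⁻ u in Ioi (t 0), ENNReal.ofReal (p u) < ⊤)
    (hx_pos : ∀ s ∈ Ici (t 0), 0 < x s)
    (hx'_nonneg : ∀ s ∈ Ici (t 0), 0 ≤ x' s) :
    ∀ k : ℕ, ∀ s ∈ Icc (t k) (ζ k),
      (1 / r s) * ∫ u in Ioi (t (k+1)), p u ≤ x' s / φ (x s) := by
  intro k s hs
  have htm := ht_mono.monotone
  have ht0 : ∀ j, t 0 ≤ t j := fun j => htm (Nat.zero_le j)
  have hsk : t k ≤ s := hs.1
  have hsζ : s ≤ ζ k := hs.2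
  have hs0 : t 0 ≤ s := (ht0 k).trans hsk
  -- x is monotone on [t 0, ∞)
  have hx_mono : MonotoneOn x (Ici (t 0)) := by
    apply monotoneOn_of_deriv_nonneg (convex_Ici _)
    · exact fun u hu => (hx_deriv u hu).continuousAt.continuousWithinAt
    · intro u hu
      rw [interior_Ici] at hu
      exact (hx_deriv u (Set.mem_Ici.mpr (le_of_lt hu))).differentiableAt.differentiableWithinAt
    · intro u hu
      rw [interior_Ici] at hu
      rw [(hx_deriv u (Set.mem_Ici.mpr (le_of_lt hu))).deriv]
      exact hx'_nonneg u (Set.mem_Ici.mpr (le_of_lt hu))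
  have hs_le_ζ : ∀ j, k ≤ j → s ≤ ζ j := by
    intro j hj
    rcases eq_or_lt_of_le hj with h | h
    · subst h; exact hsζ
    · exact hsζ.trans ((hζ k).2.trans ((htm h).trans (hζ j).1))
  -- pointwise bound
  have hpt : ∀ j, k ≤ j → ∀ u, t 0 ≤ u → φ (x s) * p u ≤ f u (x (ζ j)) := by
    intro j hj u hu
    have hζj0 : t 0 ≤ ζ j := (ht0 j).trans (hζ j).1
    have hxζ : 0 < x (ζ j) := hx_pos _ hζj0
    have h1 : p u * φ (x (ζ j)) ≤ f u (x (ζ j)) := hfp_pos u hu _ hxζ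
    have h2 : φ (x s) ≤ φ (x (ζ j)) := hφ_mono (hx_mono hs0 hζj0 (hs_le_ζ j hj))
    have hpu := hp_nonneg u hu
    nlinarith
  -- continuity of the frozen integrand
  have hFcont : ∀ j, ContinuousOn (fun u => f u (x (ζ j))) (Ici (t 0)) := by
    intro j
    exact hf_cont.comp ((continuous_id.prodMk continuous_const).continuousOn)
      (fun u hu => ⟨hu, mem_univ _⟩)
  -- interval integrability helpers
  have hp_ii : ∀ a b, t 0 ≤ a → t 0 ≤ b → IntervalIntegrable p volume a b := by
    intro a b ha hb
    exact (hp_cont.mono (fun u hu => le_trans (le_inf ha hb) hu.1)).intervalIntegrable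
  have hF_ii : ∀ j a b, t 0 ≤ a → t 0 ≤ b →
      IntervalIntegrable (fun u => f u (x (ζ j))) volume a b := by
    intro j a b ha hb
    exact ((hFcont j).mono (fun u hu => le_trans (le_inf ha hb) hu.1)).intervalIntegrable
  -- FTC on subintervals
  have hFTC : ∀ j a b, t j ≤ a → a ≤ b → b ≤ t (j+1) →
      r a * x' a - r b * x' b = ∫ u in a..b, f u (x (ζ j)) := by
    intro j a b ha hab hb
    have ha0 : t 0 ≤ a := (ht0 j).trans ha
    have hsub : Icc a b ⊆ Ici (t 0) := fun u hu => ha0.trans hu.1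
    have hgc : ContinuousOn (fun u => r u * x' u) (Icc a b) := (hr_cont.mul hx'_cont).mono hsub
    have hderiv : ∀ u ∈ Ioo a b,
        HasDerivWithinAt (fun u => r u * x' u) (-(f u (x (ζ j)))) (Ioi u) u :=
      fun u hu => (hE j u ⟨lt_of_le_of_lt ha hu.1, lt_of_lt_of_le hu.2 hb⟩).hasDerivWithinAt
    have hint : IntervalIntegrable (fun u => -(f u (x (ζ j)))) volume a b :=
      (hF_ii j a b ha0 (ha0.trans hab)).neg
    have h := intervalIntegral.integral_eq_sub_of_hasDeriv_right_of_le hab hgc hderiv hint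
    rw [intervalIntegral.integral_neg] at h
    linarith
  -- lower bound for the integral of f
  have hIb : ∀ j a b, k ≤ j → t 0 ≤ a → a ≤ b →
      φ (x s) * ∫ u in a..b, p u ≤ ∫ u in a..b, f u (x (ζ j)) := by
    intro j a b hj ha hab
    have hb0 : t 0 ≤ b := ha.trans hab
    rw [← intervalIntegral.integral_const_mul]
    apply intervalIntegral.integral_mono_on hab ((hp_ii a b ha hb0).const_mul _)
      (hF_ii j a b ha hb0)
    exact fun u hu => hpt j hj u (ha.trans hu.1)
  have hζk1 : ζ k ≤ t (k+1) := (hζ k).2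
  have hsk1 : s ≤ t (k+1) := hsζ.trans hζk1
  -- main telescoping claim
  have claim : ∀ N : ℕ, φ (x s) * (∫ u in (t (k+1))..(t (N + (k+1))), p u)
      ≤ r s * x' s - r (t (N + (k+1))) * x' (t (N + (k+1))) := by
    intro N
    induction N with
    | zero =>
      simp only [Nat.zero_add, intervalIntegral.integral_same, mul_zero]
      have h1 := hFTC k s (t (k+1)) hsk hsk1 le_rfl
      have h2 := hIb k s (t (k+1)) le_rfl hs0 hsk1
      have h3 : 0 ≤ ∫ u in s..(t (k+1)), p u :=
        intervalIntegral.integral_nonneg hsk1 (fun u hu => hp_nonneg u (hs0.trans hu.1))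
      have hxs := hx_pos s hs0
      have hφs : 0 < φ (x s) := by
        have := hφ_sign (x s) (ne_of_gt hxs); nlinarith
      nlinarith [mul_nonneg hφs.le h3]
    | succ N ih =>
      have hidx : N + 1 + (k + 1) = (N + (k + 1)) + 1 := by omega
      rw [hidx]
      set j := N + (k + 1) with hjdef
      have hkj : k ≤ j := by omega
      have hjj : t j ≤ t (j+1) := htm (Nat.le_succ j)
      have h1 := hFTC j (t j) (t (j+1)) le_rfl hjj le_rfl
      have h2 := hIb j (t j) (t (j+1)) hkj (ht0 j) hjj
      have hadd := intervalIntegral.integral_add_adjacent_intervals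
        (hp_ii (t (k+1)) (t j) (ht0 _) (ht0 _)) (hp_ii (t j) (t (j+1)) (ht0 _) (ht0 _))
      rw [← hadd, mul_add]
      linarith
  have bound : ∀ N : ℕ, φ (x s) * (∫ u in (t (k+1))..(t (N + (k+1))), p u) ≤ r s * x' s := by
    intro N
    have hnn : 0 ≤ r (t (N + (k+1))) * x' (t (N + (k+1))) :=
      mul_nonneg (hr_pos _ (ht0 _)).le (hx'_nonneg _ (ht0 _))
    linarith [claim N]
  -- integrability on Ioi
  have ht01 : t 0 ≤ t (k+1) := ht0 _
  have hsub : Ioi (t (k+1)) ⊆ Ioi (t 0) := Ioi_subset_Ioi ht01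
  have hcont' : ContinuousOn p (Ioi (t (k+1))) :=
    hp_cont.mono (fun u hu => (ht01.trans (le_of_lt hu)))
  have hIntOn : IntegrableOn p (Ioi (t (k+1))) := by
    refine ⟨hcont'.aestronglyMeasurable measurableSet_Ioi, ?_⟩
    rw [hasFiniteIntegral_iff_ofReal]
    · exact lt_of_le_of_lt (lintegral_mono_set hsub) hp_int
    · exact (ae_restrict_mem measurableSet_Ioi).mono
        (fun a ha => hp_nonneg a (ht01.trans (le_of_lt ha)))
  have hnat : Tendsto (fun N : ℕ => t (N + (k+1))) atTop atTop :=
    ht_top.comp (tendsto_add_atTop_nat (k+1))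
  have hT : Tendsto (fun N : ℕ => ∫ u in (t (k+1))..(t (N + (k+1))), p u) atTop
      (nhds (∫ u in Ioi (t (k+1)), p u)) :=
    intervalIntegral_tendsto_integral_Ioi _ hIntOn hnat
  have key : φ (x s) * ∫ u in Ioi (t (k+1)), p u ≤ r s * x' s :=
    le_of_tendsto (tendsto_const_nhds.mul hT) (Filter.Eventually.of_forall bound)
  have hxs := hx_pos s hs0
  have hφs : 0 < φ (x s) := by
    have := hφ_sign (x s) (ne_of_gt hxs); nlinarith
  rw [one_div_mul_eq_div, div_le_div_iff₀ (hr_pos s hs0) hφs]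
  linarith [key, mul_comm (φ (x s)) (∫ u in Ioi (t (k+1)), p u), mul_comm (r s) (x' s)]
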